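/- Let D be a STRIPS+ domain and let D* be the STRIPS domain obtained from D by pushing, for each action schema a(x) with precondition Φ_a(x,y,z), the variables y and z as additional explicit arguments, keeping the same precondition atoms and the same add and delete lists. Then for every instance with objects O, every state s, and every ground action a(o) of D: (1) a(o) is applicable in s in D if and only if there exist tuples o_y and o_z over O such that the ground STRIPS action a*(o, o_y, o_z) is applicable in s in D*; and (2) if moreover the z variables of a are determined by x in s, then for every such (o_y, o_z), the successor state of s under a*(o, o_y, o_z) in D* equals the successor state of s under a(o) in D (under any satisfying binding). That is, the semantics of a STRIPS+ action is exactly the semantics of its STRIPS translation with the implicit and existential variables made explicit. -/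

import Mathlib

/-! Core formalization of STRIPS+ domains. -/

/-- A variable of an action schema: explicit argument, existential variable, or
implicit argument variable. -/
inductive SVar (nx ny nz : ℕ) : Type
  | expl : Fin nx → SVar nx ny nz
  | exist : Fin ny → SVar nx ny nz
  | impl : Fin nz → SVar nx ny nz

/-- An action schema: explicit arguments `x = (x_1,…,x_nx)`, existential variables
`y`, implicit argument variables `z`, a precondition given as a finite conjunction
(list) of lifted atoms, and add and delete lists of lifted atoms. -/
structure Schema (Pred : Type) : Type where
  nx : ℕ
  ny : ℕ
  nz : ℕ
  pre : List (Pred × List (SVar nx ny nz))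
  add : List (Pred × List (SVar nx ny nz))
  del : List (Pred × List (SVar nx ny nz))

/-- A STRIPS+ domain: predicate symbols with arities and action schemas. -/
structure Domain (Pred Act : Type) : Type where
  arity : Pred → ℕ
  schema : Act → Schema Pred

/-- Syntactic well-formedness of a STRIPS+ domain: every atom respects the arity of
its predicate, and the existential `y` variables occur in no effect. -/
def ValidDomain {Pred Act : Type} (D : Domain Pred Act) : Prop :=
  ∀ a : Act,
    (∀ atm ∈ (D.schema a).pre, atm.2.length = D.arity atm.1) ∧
    (∀ atm ∈ (D.schema a).add ++ (D.schema a).del,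
       atm.2.length = D.arity atm.1 ∧ ∀ j, SVar.exist j ∉ atm.2)

/-- A ground atom `p(o_1,…,o_k)`. -/
abbrev GAtom (Pred Obj : Type) := Pred × List Obj

/-- A state: a set of ground atoms. -/
abbrev PState (Pred Obj : Type) := Set (GAtom Pred Obj)

/-- The ground instance of a lifted atom under a binding `σ`. -/
def groundAtom {nx ny nz : ℕ} {Pred Obj : Type} (σ : SVar nx ny nz → Obj)
    (atm : Pred × List (SVar nx ny nz)) : GAtom Pred Obj :=
  (atm.1, atm.2.map σ)

variable {Pred Pred' Act Obj : Type}

/-- A binding binds the explicit arguments `x` to the tuple `o`. -/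
def BindsArgs {nx ny nz : ℕ} (σ : SVar nx ny nz → Obj) (o : List Obj) : Prop :=
  o = List.ofFn (fun i : Fin nx => σ (SVar.expl i))

/-- A binding `σ` satisfies the precondition `Φ_a` in state `s` if it grounds every
atom of `Φ_a` to an atom of `s`. -/
def Sat (D : Domain Pred Act) (a : Act)
    (σ : SVar (D.schema a).nx (D.schema a).ny (D.schema a).nz → Obj)
    (s : PState Pred Obj) : Prop :=
  ∀ atm ∈ (D.schema a).pre, groundAtom σ atm ∈ s

/-- The ground add effects of schema `a` under binding `σ`. -/
def addSet (D : Domain Pred Act) (a : Act)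
    (σ : SVar (D.schema a).nx (D.schema a).ny (D.schema a).nz → Obj) :
    Set (GAtom Pred Obj) :=
  {q | ∃ atm ∈ (D.schema a).add, q = groundAtom σ atm}

/-- The ground delete effects of schema `a` under binding `σ`. -/
def delSet (D : Domain Pred Act) (a : Act)
    (σ : SVar (D.schema a).nx (D.schema a).ny (D.schema a).nz → Obj) :
    Set (GAtom Pred Obj) :=
  {q | ∃ atm ∈ (D.schema a).del, q = groundAtom σ atm}

/-- Applying action `a` under binding `σ` in state `s`. -/
def applyAct (D : Domain Pred Act) (a : Act)
    (σ : SVar (D.schema a).nx (D.schema a).ny (D.schema a).nz → Obj)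
    (s : PState Pred Obj) : PState Pred Obj :=
  (s \ delSet D a σ) ∪ addSet D a σ

/-- The ground action `a(o)` is applicable in `s`: some binding with `x := o`
satisfies `Φ_a` in `s`. -/
def Applicable (D : Domain Pred Act) (a : Act) (o : List Obj) (s : PState Pred Obj) : Prop :=
  ∃ σ, BindsArgs σ o ∧ Sat D a σ s

/-- One transition step of the domain. -/
def Step (D : Domain Pred Act) (s s' : PState Pred Obj) : Prop :=
  ∃ a σ, Sat D a σ s ∧ s' = applyAct D a σ s

/-- `Reachable D s s'`: state `s'` is reachable from `s` by applicable ground actions. -/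
def Reachable (D : Domain Pred Act) : PState Pred Obj → PState Pred Obj → Prop :=
  Relation.ReflTransGen (Step D)

/-- A STRIPS+ domain is well-formed if in every reachable state of any instance, no
applicable ground action adds an atom that is already true nor deletes one that is
already false. -/
def WellFormed (D : Domain Pred Act) : Prop :=
  ∀ (Obj : Type) (init s : PState Pred Obj), Reachable D init s →
    ∀ (a : Act) (σ : SVar (D.schema a).nx (D.schema a).ny (D.schema a).nz → Obj),
      Sat D a σ s →
        (∀ q ∈ addSet D a σ, q ∉ s) ∧ (∀ q ∈ delSet D a σ, q ∈ s)

/-- A STRIPS+ domain is strongly connected if in every instance every state reachable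
from the initial state can reach the initial state back. -/
def StronglyConnected (D : Domain Pred Act) : Prop :=
  ∀ (Obj : Type) (init s : PState Pred Obj), Reachable D init s → Reachable D s init

/-- An execution of the ground-action sequence `τ` along hidden states `sts`. -/
def Execution (D : Domain Pred Act) (τ : List (Act × List Obj))
    (sts : ℕ → PState Pred Obj) : Prop :=
  ∀ i : Fin τ.length, ∃ σ,
    BindsArgs σ (τ.get i).2 ∧ Sat D (τ.get i).1 σ (sts i) ∧
    sts ((i : ℕ) + 1) = applyAct D (τ.get i).1 σ (sts i)

/-- An action trace of `D`: a ground action sequence applicable from a state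
reachable from the initial state of an instance of `D`. -/
def ActionTrace (D : Domain Pred Act) (τ : List (Act × List Obj)) : Prop :=
  ∃ (init : PState Pred Obj) (sts : ℕ → PState Pred Obj),
    Reachable D init (sts 0) ∧ Execution D τ sts

/-- An action trace `τ` is negative for a domain `D`: with the effects of each action
in `τ` grounded (implicit variables set by the preconditions of `D` along an
execution of `τ`), some action `a_i(o_i)` in `τ` has a ground precondition atom `q`
deleted by an earlier action `a_j(o_j)` and not re-added by any action in between. -/
def NegFor (D : Domain Pred Act) (τ : List (Act × List Obj)) : Prop :=
  ∃ (sts : ℕ → PState Pred Obj)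
    (σs : ∀ i : Fin τ.length,
      SVar (D.schema (τ.get i).1).nx (D.schema (τ.get i).1).ny (D.schema (τ.get i).1).nz → Obj),
    (∀ i : Fin τ.length,
        BindsArgs (σs i) (τ.get i).2 ∧
        sts ((i : ℕ) + 1) = applyAct D (τ.get i).1 (σs i) (sts i) ∧
        (Applicable D (τ.get i).1 (τ.get i).2 (sts i) → Sat D (τ.get i).1 (σs i) (sts i))) ∧
    ∃ (i j : Fin τ.length), (j : ℕ) < (i : ℕ) ∧
      ∃ q : GAtom Pred Obj,
        (∃ atm ∈ (D.schema (τ.get i).1).pre, q = groundAtom (σs i) atm) ∧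
        q ∈ delSet D (τ.get j).1 (σs j) ∧
        ∀ l : Fin τ.length, (j : ℕ) < (l : ℕ) → (l : ℕ) < (i : ℕ) →
          q ∉ addSet D (τ.get l).1 (σs l)

/-- An action trace is positive for `D` if it is not negative for `D`. -/
def PosFor (D : Domain Pred Act) (τ : List (Act × List Obj)) : Prop :=
  ¬ NegFor D τ

/-- `D'` is equivalent to `D`: every action trace of `D` that is positive for `D` is
positive for `D'`, and every action trace of `D` that is negative for `D` is negative
for `D'`. -/
def Equivalent (D : Domain Pred Act) (D' : Domain Pred' Act) : Prop :=
  ∀ (Obj : Type) (τ : List (Act × List Obj)), ActionTrace D τ →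
    (PosFor D τ → PosFor D' τ) ∧ (NegFor D τ → NegFor D' τ)

/-- The atom `atm` belongs to the subquery `Q^i` of schema `sch`: it is a
precondition atom containing `z_i` and no `z_j` with `j > i`. -/
def InSubquery {P : Type} (sch : Schema P) (i : Fin sch.nz)
    (atm : P × List (SVar sch.nx sch.ny sch.nz)) : Prop :=
  atm ∈ sch.pre ∧ SVar.impl i ∈ atm.2 ∧ ∀ j, i < j → SVar.impl j ∉ atm.2

/-- Stratification: each subquery `Q^i` determines the value of `z_i` given `x` and
`z_1,…,z_{i-1}` in every state where a ground instance of the schema is applicable. -/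
def Stratified (D : Domain Pred Act) : Prop :=
  ∀ (Obj : Type) (s : PState Pred Obj) (a : Act) (o : List Obj),
    Applicable D a o s →
    ∀ (i : Fin (D.schema a).nz)
      (σ σ' : SVar (D.schema a).nx (D.schema a).ny (D.schema a).nz → Obj),
      BindsArgs σ o → BindsArgs σ' o →
      (∀ atm, InSubquery (D.schema a) i atm → groundAtom σ atm ∈ s) →
      (∀ atm, InSubquery (D.schema a) i atm → groundAtom σ' atm ∈ s) →
      (∀ j, j < i → σ (SVar.impl j) = σ' (SVar.impl j)) →
      σ (SVar.impl i) = σ' (SVar.impl i)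

/-- Vertices of the dependency graph of a domain: the predicates and the implicit
variables `z_i^a` of the schemas. -/
def DepVert (D : Domain Pred Act) : Type :=
  Pred ⊕ (Σ a : Act, Fin (D.schema a).nz)

/-- Some `p`-effect of the schema involves `z_i`. -/
def OccursInEff {P : Type} (sch : Schema P) (p : P) (i : Fin sch.nz) : Prop :=
  ∃ atm, (atm ∈ sch.add ∨ atm ∈ sch.del) ∧ atm.1 = p ∧ SVar.impl i ∈ atm.2

/-- Edges of the dependency graph `G_D`. -/
def DepEdge (D : Domain Pred Act) (u v : DepVert D) : Prop :=
  (∃ p a i, u = Sum.inl p ∧ v = Sum.inr ⟨a, i⟩ ∧ OccursInEff (D.schema a) p i) ∨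
  (∃ a i p, u = Sum.inr ⟨a, i⟩ ∧ v = Sum.inl p ∧
     ∃ atm, InSubquery (D.schema a) i atm ∧ atm.1 = p) ∨
  (∃ (a : Act) (i : Fin (D.schema a).nz) (j : Fin (D.schema a).nz), i < j ∧ u = Sum.inr ⟨a, j⟩ ∧ v = Sum.inr ⟨a, i⟩ ∧
     ∃ atm ∈ (D.schema a).pre, SVar.impl i ∈ atm.2 ∧ SVar.impl j ∈ atm.2)

/-- A directed graph is acyclic with all directed paths of length at most `d`. -/
def AcyclicRankLe {V : Type} (E : V → V → Prop) (d : ℕ) : Prop :=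
  (∀ v, ¬ Relation.TransGen E v v) ∧
  ∀ (k : ℕ) (f : Fin (k + 1) → V),
    (∀ i : Fin k, E (f i.castSucc) (f i.succ)) → k ≤ d

/-- An extended trace: a ground action sequence together with annotated pairs of time
points whose hidden states are equal. -/
structure ExtTrace (Act Obj : Type) : Type where
  acts : List (Act × List Obj)
  eqs : List (ℕ × ℕ)

/-- The extended trace `t` is realizable in `D`: it is an action trace of `D` with an
execution whose hidden states are equal at the annotated time points. -/
def RealizableExt (D : Domain Pred Act) (t : ExtTrace Act Obj) : Prop :=
  ∃ (init : PState Pred Obj) (sts : ℕ → PState Pred Obj),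
    Reachable D init (sts 0) ∧ Execution D t.acts sts ∧
    ∀ pr ∈ t.eqs, pr.1 ≤ t.acts.length → pr.2 ≤ t.acts.length → sts pr.1 = sts pr.2

/-- Reindexing of schema variables when the existential `y` and implicit `z`
variables are pushed as additional explicit arguments after the `x` variables. -/
def pushIdx {nx ny nz : ℕ} : SVar nx ny nz → Fin (nx + ny + nz)
  | .expl i => (i.castAdd ny).castAdd nz
  | .exist j => (Fin.natAdd nx j).castAdd nz
  | .impl l => Fin.natAdd (nx + ny) l

/-- Translation of a lifted atom under the pushing of variables. -/
def pushAtom {P : Type} {nx ny nz : ℕ} (atm : P × List (SVar nx ny nz)) :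
    P × List (SVar (nx + ny + nz) 0 0) :=
  (atm.1, atm.2.map (fun v => SVar.expl (pushIdx v)))

/-- The STRIPS schema obtained from a STRIPS+ schema by pushing the `y` and `z`
variables as additional explicit arguments, keeping the same precondition atoms and
the same add and delete lists. -/
def pushSchema {P : Type} (sch : Schema P) : Schema P where
  nx := sch.nx + sch.ny + sch.nz
  ny := 0
  nz := 0
  pre := sch.pre.map pushAtom
  add := sch.add.map pushAtom
  del := sch.del.map pushAtom

/-- The STRIPS domain `D*` obtained from a STRIPS+ domain `D` by pushing, for each
action schema, the `y` and `z` variables as additional explicit arguments. -/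
def pushDomain {Pred Act : Type} (D : Domain Pred Act) : Domain Pred Act :=
  ⟨D.arity, fun a => pushSchema (D.schema a)⟩

/-- The implicit variables `z` of schema `a` are determined by `x := o` in state `s`:
all bindings satisfying `Φ_a` in `s` with `x := o` agree on the values of `z`. -/
def Determined {Pred Act Obj : Type} (D : Domain Pred Act) (a : Act) (o : List Obj)
    (s : PState Pred Obj) : Prop :=
  ∀ σ σ', BindsArgs σ o → Sat D a σ s → BindsArgs σ' o → Sat D a σ' s →
    ∀ i, σ (SVar.impl i) = σ' (SVar.impl i)

/-! Auxiliary definitions and lemmas for the push translation. -/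

/-- Inverse of `pushIdx`. -/
def unpushIdx {nx ny nz : ℕ} (k : Fin (nx + ny + nz)) : SVar nx ny nz :=
  if h : (k : ℕ) < nx then .expl ⟨k, h⟩
  else if h2 : (k : ℕ) < nx + ny then .exist ⟨(k : ℕ) - nx, by omega⟩
  else .impl ⟨(k : ℕ) - (nx + ny), by omega⟩

lemma unpushIdx_pushIdx {nx ny nz : ℕ} (v : SVar nx ny nz) :
    unpushIdx (pushIdx v) = v := by
  cases v with
  | expl i =>
      simp [unpushIdx, pushIdx, Fin.castAdd, Fin.castLE, i.isLt]
  | exist j =>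
      have hj : (j : ℕ) < ny := j.isLt
      simp only [unpushIdx, pushIdx, Fin.coe_castAdd, Fin.coe_natAdd]
      split_ifs with h1 h2
      · omega
      · simp
  | impl l =>
      have hl : (l : ℕ) < nz := l.isLt
      simp only [unpushIdx, pushIdx, Fin.coe_natAdd]
      split_ifs with h1 h2
      · omega
      · simp; omega

/-- Pull back a binding of the pushed schema. -/
def pullBind {Obj : Type} {nx ny nz : ℕ} (σstar : SVar (nx + ny + nz) 0 0 → Obj) :
    SVar nx ny nz → Obj :=
  fun v => σstar (SVar.expl (pushIdx v))

/-- Push a binding. -/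
def pushBind {Obj : Type} {nx ny nz : ℕ} (σ : SVar nx ny nz → Obj) :
    SVar (nx + ny + nz) 0 0 → Obj
  | .expl k => σ (unpushIdx k)
  | .exist j => j.elim0
  | .impl l => l.elim0

lemma pullBind_pushBind {Obj : Type} {nx ny nz : ℕ} (σ : SVar nx ny nz → Obj) :
    pullBind (pushBind σ) = σ := by
  funext v; simp [pullBind, pushBind, unpushIdx_pushIdx]

lemma groundAtom_pushAtom {Pred Obj : Type} {nx ny nz : ℕ}
    (σstar : SVar (nx + ny + nz) 0 0 → Obj) (atm : Pred × List (SVar nx ny nz)) :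
    groundAtom σstar (pushAtom atm) = groundAtom (pullBind σstar) atm := by
  simp [groundAtom, pushAtom, pullBind, List.map_map, Function.comp]

lemma sat_push_iff {Pred Act Obj : Type} (D : Domain Pred Act) (a : Act)
    (σstar : SVar ((D.schema a).nx + (D.schema a).ny + (D.schema a).nz) 0 0 → Obj)
    (s : PState Pred Obj) :
    Sat (pushDomain D) a σstar s ↔ Sat D a (pullBind σstar) s := by
  constructor
  · intro h atm hatm
    have := h (pushAtom atm) (List.mem_map_of_mem (f := pushAtom) hatm)
    erw [groundAtom_pushAtom] at this; exact this
  · intro h atm hatm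
    obtain ⟨atm', hatm', rfl⟩ : ∃ b ∈ (D.schema a).pre, pushAtom b = atm := by
      exact List.mem_map.mp hatm
    erw [groundAtom_pushAtom]
    exact h atm' hatm'

lemma pushIdx_unpushIdx {nx ny nz : ℕ} (k : Fin (nx + ny + nz)) :
    pushIdx (unpushIdx k : SVar nx ny nz) = k := by
  unfold unpushIdx
  split_ifs with h1 h2 <;> apply Fin.ext <;>
    simp [pushIdx, Fin.coe_castAdd, Fin.coe_natAdd] <;> omega

lemma ofFn_pushBind {Obj : Type} {nx ny nz : ℕ} (σ : SVar nx ny nz → Obj) :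
    List.ofFn (fun k : Fin (nx + ny + nz) => pushBind σ (SVar.expl k)) =
      (List.ofFn fun i => σ (.expl i)) ++ (List.ofFn fun j => σ (.exist j)) ++
        (List.ofFn fun l => σ (.impl l)) := by
  rw [List.ofFn_add, List.ofFn_add]
  have e : ∀ k : Fin (nx + ny + nz), pushBind σ (SVar.expl k) = σ (unpushIdx k) := fun _ => rfl
  congr 1
  · congr 1
    · congr 1; funext i
      rw [e]
      have h' : ((Fin.castAdd nz) ((Fin.castAdd ny) i) : Fin (nx + ny + nz)) =
          pushIdx (SVar.expl i : SVar nx ny nz) := rfl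
      exact congrArg σ (unpushIdx_pushIdx (SVar.expl i))
    · congr 1; funext j
      rw [e]
      have h' : ((Fin.castAdd nz) ((Fin.natAdd nx) j) : Fin (nx + ny + nz)) =
          pushIdx (SVar.exist j : SVar nx ny nz) := rfl
      exact congrArg σ (unpushIdx_pushIdx (SVar.exist j))
  · congr 1; funext l
    rw [e]
    have h' : ((Fin.natAdd (nx + ny)) l : Fin (nx + ny + nz)) =
        pushIdx (SVar.impl l : SVar nx ny nz) := rfl
    rw [h', unpushIdx_pushIdx]

lemma ofFn_star {Obj : Type} {nx ny nz : ℕ} (σstar : SVar (nx + ny + nz) 0 0 → Obj) :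
    List.ofFn (fun k : Fin (nx + ny + nz) => σstar (SVar.expl k)) =
      (List.ofFn fun i => pullBind σstar (.expl i)) ++
        (List.ofFn fun j => pullBind σstar (.exist j)) ++
        (List.ofFn fun l => pullBind σstar (.impl l)) := by
  rw [← ofFn_pushBind]
  congr 1; funext k
  show σstar (SVar.expl k) = pullBind σstar (unpushIdx k)
  unfold pullBind
  rw [pushIdx_unpushIdx]

lemma bindsArgs_pull {Obj : Type} {nx ny nz : ℕ} (σstar : SVar (nx + ny + nz) 0 0 → Obj)
    (o oy oz : List Obj) (hy : oy.length = ny) (hz : oz.length = nz)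
    (hb : (o ++ oy ++ oz) = List.ofFn (fun k : Fin (nx + ny + nz) => σstar (SVar.expl k))) :
    o = List.ofFn (fun i => pullBind σstar (.expl i)) := by
  rw [ofFn_star] at hb
  have hlen : (o ++ oy).length = ((List.ofFn fun i => pullBind σstar (.expl i)) ++
      (List.ofFn fun j => pullBind σstar (.exist j))).length := by
    have := congrArg List.length hb
    simp at this ⊢
    omega
  obtain ⟨hb1, -⟩ := List.append_inj hb (by simpa using hlen)
  have hox : o.length = nx := by
    have h2 := hlen
    simp [hy] at h2
    omega
  exact (List.append_inj hb1 (by simpa using hox)).1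

/-- **STRIPS+ semantics = STRIPS translation**: for every state `s` and ground
STRIPS+ action `a(o)`: (1) `a(o)` is applicable in `s` in `D` iff there are tuples
`o_y, o_z` over the objects such that the ground STRIPS action `a*(o, o_y, o_z)` of
the pushed domain `D*` is applicable in `s`; and (2) if moreover the `z` variables
of `a` are determined by `x` in `s`, then for every such `(o_y, o_z)` the successor
state of `s` under `a*(o, o_y, o_z)` in `D*` equals the successor state of `s` under
`a(o)` in `D` (under any satisfying binding). -/
theorem stripsPlus_semantics_push {Pred Act Obj : Type}
    (D : Domain Pred Act) (hvalid : ValidDomain D)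
    (a : Act) (o : List Obj) (s : PState Pred Obj) :
    (Applicable D a o s ↔
      ∃ oy oz : List Obj, oy.length = (D.schema a).ny ∧ oz.length = (D.schema a).nz ∧
        Applicable (pushDomain D) a (o ++ oy ++ oz) s) ∧
    (Applicable D a o s → Determined D a o s →
      ∀ oy oz : List Obj, oy.length = (D.schema a).ny → oz.length = (D.schema a).nz →
        ∀ σstar, BindsArgs σstar (o ++ oy ++ oz) → Sat (pushDomain D) a σstar s →
          ∀ σ, BindsArgs σ o → Sat D a σ s →
            applyAct (pushDomain D) a σstar s = applyAct D a σ s) := by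
  constructor
  · constructor
    · rintro ⟨σ, hbo, hsat⟩
      refine ⟨List.ofFn (fun j => σ (.exist j)), List.ofFn (fun l => σ (.impl l)),
        by simp, by simp, pushBind σ, ?_, ?_⟩
      · show o ++ _ ++ _ = List.ofFn (fun k => pushBind σ (SVar.expl k))
        rw [ofFn_pushBind, hbo]
      · exact (sat_push_iff D a (pushBind σ) s).mpr (by rw [pullBind_pushBind]; exact hsat)
    · rintro ⟨oy, oz, hy, hz, σstar, hbs, hsat⟩
      exact ⟨pullBind σstar, bindsArgs_pull σstar o oy oz hy hz hbs,
        (sat_push_iff _ _ _ _).mp hsat⟩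
  · rintro happ hdet oy oz hy hz σstar hbs hsatstar σ hbo hsato
    have hb' : BindsArgs (pullBind σstar) o := bindsArgs_pull σstar o oy oz hy hz hbs
    have hsat' : Sat D a (pullBind σstar) s := (sat_push_iff _ _ _ _).mp hsatstar
    have hexp : ∀ i, pullBind σstar (SVar.expl i) = σ (SVar.expl i) := by
      intro i
      have h2 : (List.ofFn fun i => pullBind σstar (SVar.expl i)) =
          List.ofFn fun i => σ (SVar.expl i) := hb'.symm.trans hbo
      exact congrFun (List.ofFn_inj.mp h2) i
    have himp : ∀ i, pullBind σstar (SVar.impl i) = σ (SVar.impl i) :=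
      hdet _ _ hb' hsat' hbo hsato
    have heff : ∀ atm ∈ (D.schema a).add ++ (D.schema a).del,
        groundAtom (pullBind σstar) atm = groundAtom σ atm := by
      intro atm hatm
      obtain ⟨-, hnoy⟩ := (hvalid a).2 atm hatm
      unfold groundAtom
      congr 1
      apply List.map_congr_left
      intro v hv
      cases v with
      | expl i => exact hexp i
      | exist j => exact absurd hv (hnoy j)
      | impl l => exact himp l
    have hadd : addSet (pushDomain D) a σstar = addSet D a σ := by
      ext q
      simp only [addSet, Set.mem_setOf_eq]
      constructor
      · rintro ⟨atm, hatm, rfl⟩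
        obtain ⟨b, hb, rfl⟩ := List.mem_map.mp hatm
        exact ⟨b, hb, by erw [groundAtom_pushAtom, heff b (List.mem_append_left _ hb)]⟩
      · rintro ⟨b, hb, rfl⟩
        exact ⟨pushAtom b, List.mem_map_of_mem hb,
          by erw [groundAtom_pushAtom, heff b (List.mem_append_left _ hb)]⟩
    have hdel : delSet (pushDomain D) a σstar = delSet D a σ := by
      ext q
      simp only [delSet, Set.mem_setOf_eq]
      constructor
      · rintro ⟨atm, hatm, rfl⟩
        obtain ⟨b, hb, rfl⟩ := List.mem_map.mp hatm
        exact ⟨b, hb, by erw [groundAtom_pushAtom, heff b (List.mem_append_right _ hb)]⟩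
      · rintro ⟨b, hb, rfl⟩
        exact ⟨pushAtom b, List.mem_map_of_mem hb,
          by erw [groundAtom_pushAtom, heff b (List.mem_append_right _ hb)]⟩
    unfold applyAct
    rw [hadd, hdel]
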